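/- For any natural number p ≥ 1, the configuration space B(S¹, p) of unordered subsets of cardinality p in the circle S¹ is the total space of a locally trivial fiber bundle over S¹ whose fiber is homeomorphic to ℝ^(p-1). -/

import Mathlib

/-- The ordered configuration space of `p` points in `M`. -/
def OConf (M : Type) [TopologicalSpace M] (p : ℕ) : Type :=
  {f : Fin p → M // Function.Injective f}

instance (M : Type) [TopologicalSpace M] (p : ℕ) : TopologicalSpace (OConf M p) :=
  inferInstanceAs (TopologicalSpace {f : Fin p → M // Function.Injective f})

/-- Two ordered configurations are identified iff they differ by a permutation. -/
def confSetoid (M : Type) [TopologicalSpace M] (p : ℕ) : Setoid (OConf M p) where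
  r f g := ∃ σ : Equiv.Perm (Fin p), f.1 = g.1 ∘ σ
  iseqv := by
    refine ⟨fun f => ⟨1, ?_⟩, fun {f g} h => ?_, fun {f g h} h₁ h₂ => ?_⟩
    · funext i; simp
    · obtain ⟨σ, hσ⟩ := h
      exact ⟨σ⁻¹, by funext i; simp [hσ]⟩
    · obtain ⟨σ, hσ⟩ := h₁
      obtain ⟨τ, hτ⟩ := h₂
      exact ⟨τ * σ, by funext i; simp [hσ, hτ, Function.comp]⟩

/-- The configuration space `B(M, p)` of unordered subsets of cardinality `p` in `M`. -/
def UConf (M : Type) [TopologicalSpace M] (p : ℕ) : Type :=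
  Quotient (confSetoid M p)

instance (M : Type) [TopologicalSpace M] (p : ℕ) : TopologicalSpace (UConf M p) :=
  instTopologicalSpaceQuotient

noncomputable section

namespace Stmt0

open Real Set Function

variable {M : Type} [TopologicalSpace M] {p : ℕ}

/-! ### Generalities on the quotient -/

/-- Permutation action on ordered configurations. -/
def permMap (σ : Equiv.Perm (Fin p)) (f : OConf M p) : OConf M p :=
  ⟨f.1 ∘ σ, f.2.comp σ.injective⟩

lemma continuous_permMap (σ : Equiv.Perm (Fin p)) : Continuous (permMap (M := M) σ) := by
  apply Continuous.subtype_mk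
  exact continuous_pi fun i => (continuous_apply (σ i)).comp continuous_subtype_val

lemma isOpenMap_mk : IsOpenMap (Quotient.mk (confSetoid M p)) := by
  intro O hO
  rw [isOpen_coinduced]
  have : Quotient.mk (confSetoid M p) ⁻¹' (Quotient.mk (confSetoid M p) '' O)
      = ⋃ σ : Equiv.Perm (Fin p), permMap σ '' O := by
    ext f
    simp only [mem_preimage, mem_image, mem_iUnion]
    constructor
    · rintro ⟨g, hg, hfg⟩
      obtain ⟨σ, hσ⟩ := Quotient.exact hfg.symm
      exact ⟨σ, g, hg, Subtype.ext hσ.symm⟩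
    · rintro ⟨σ, g, hg, rfl⟩
      refine ⟨g, hg, Quotient.sound ⟨σ⁻¹, funext fun i => ?_⟩⟩
      show g.1 i = g.1 (σ (σ⁻¹ i))
      simp
  show IsOpen (Quotient.mk (confSetoid M p) ⁻¹' (Quotient.mk (confSetoid M p) '' O))
  rw [this]
  exact isOpen_iUnion fun σ => ((Homeomorph.mk ⟨permMap σ, permMap σ⁻¹,
    fun f => Subtype.ext (funext fun i => by show f.1 (σ (σ⁻¹ i)) = f.1 i; simp),
    fun f => Subtype.ext (funext fun i => by show f.1 (σ⁻¹ (σ i)) = f.1 i; simp)⟩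
    (continuous_permMap σ) (continuous_permMap σ⁻¹)).isOpenMap O hO)

/-! ### The projection -/

variable [CommMonoid M]

/-- The projection: product of the points. -/
def projO (f : OConf M p) : M := ∏ i, f.1 i

lemma projO_perm (f g : OConf M p) (h : (confSetoid M p).r f g) : projO f = projO g := by
  obtain ⟨σ, hσ⟩ := h
  unfold projO
  rw [hσ]
  exact (Equiv.prod_comp σ g.1)

/-- The projection on the unordered configuration space. -/
def projU : UConf M p → M :=
  Quotient.lift projO projO_perm

variable [ContinuousMul M]

lemma continuous_projU : Continuous (projU (M := M) (p := p)) := by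
  apply Continuous.quotient_lift
  exact continuous_finset_prod _ fun i _ => (continuous_apply i).comp continuous_subtype_val

end Stmt0
section PartB
namespace Stmt0
open Real Set Function Finset

variable {q : ℕ}

/-- Extension of a `Fin q`-tuple by zero. -/
def dext (d : Fin q → ℝ) (j : ℕ) : ℝ := if h : j < q then d ⟨j, h⟩ else 0

/-- Partial sums. -/
def psum (d : Fin q → ℝ) (i : ℕ) : ℝ := ∑ j ∈ Finset.range i, dext d j

/-- Sum of all partial sums. -/
def csum (d : Fin q → ℝ) : ℝ := ∑ i : Fin (q + 1), psum d i

/-- Reconstruct a tuple from its sum `s` and consecutive gaps `d`. -/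
def mkTheta (s : ℝ) (d : Fin q → ℝ) : Fin (q + 1) → ℝ :=
  fun i => (s - csum d) / (q + 1) + psum d i

/-- Consecutive gaps of a tuple. -/
def gaps (θ : Fin (q + 1) → ℝ) : Fin q → ℝ := fun j => θ j.succ - θ j.castSucc

lemma psum_succ (d : Fin q → ℝ) (i : ℕ) : psum d (i + 1) = psum d i + dext d i :=
  Finset.sum_range_succ _ _

lemma sum_psum_gaps (θ : Fin (q + 1) → ℝ) (k : ℕ) (hk : k < q + 1) :
    psum (gaps θ) k = θ ⟨k, hk⟩ - θ 0 := by
  induction k with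
  | zero => simp [psum]
  | succ k ih =>
    have hk' : k < q + 1 := Nat.lt_of_succ_lt hk
    have hkq : k < q := by omega
    rw [psum_succ, ih hk']
    have : dext (gaps θ) k = θ ⟨k + 1, hk⟩ - θ ⟨k, hk'⟩ := by
      rw [dext, dif_pos hkq]
      congr 1
    rw [this]; ring

lemma sum_gaps (θ : Fin (q + 1) → ℝ) :
    ∑ j, gaps θ j = θ (Fin.last q) - θ 0 := by
  have h1 : ∑ j, gaps θ j = ∑ j ∈ Finset.range q, dext (gaps θ) j := by
    rw [← Fin.sum_univ_eq_sum_range]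
    apply Finset.sum_congr rfl
    intro j _
    rw [dext, dif_pos j.isLt]
  rw [h1]
  have := sum_psum_gaps θ q (Nat.lt_succ_self q)
  rw [psum] at this
  rw [this]
  rfl

lemma sum_mkTheta (s : ℝ) (d : Fin q → ℝ) : ∑ i, mkTheta s d i = s := by
  unfold mkTheta
  rw [Finset.sum_add_distrib, Finset.sum_const, Finset.card_univ, Fintype.card_fin]
  have : (q + 1 : ℝ) ≠ 0 := by positivity
  field_simp
  rw [csum]
  ring_nf
  have hx : (1 + (q:ℝ)) * (1 + (q:ℝ))⁻¹ = 1 := mul_inv_cancel₀ (by positivity)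
  linear_combination (s - ∑ i : Fin (q + 1), psum d ↑i) * hx

lemma gaps_mkTheta (s : ℝ) (d : Fin q → ℝ) : gaps (mkTheta s d) = d := by
  funext j
  unfold gaps mkTheta
  have h1 : (j.succ : ℕ) = (j : ℕ) + 1 := rfl
  have h2 : ((j.castSucc : Fin (q+1)) : ℕ) = (j : ℕ) := rfl
  simp only [h1, h2]
  rw [psum_succ d (j : ℕ)]
  rw [dext, dif_pos j.isLt]
  simp

lemma mkTheta_gaps (θ : Fin (q + 1) → ℝ) : mkTheta (∑ i, θ i) (gaps θ) = θ := by
  funext i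
  unfold mkTheta
  have hps : psum (gaps θ) i = θ i - θ 0 := by
    have := sum_psum_gaps θ i i.isLt
    simpa using this
  have hcs : csum (gaps θ) = (∑ i, θ i) - (q + 1) * θ 0 := by
    unfold csum
    have : ∀ i : Fin (q + 1), psum (gaps θ) i = θ i - θ 0 := fun i => by
      have := sum_psum_gaps θ i i.isLt
      simpa using this
    rw [Finset.sum_congr rfl fun i _ => this i]
    rw [Finset.sum_sub_distrib, Finset.sum_const, Finset.card_univ, Fintype.card_fin]
    ring
  rw [hps, hcs]
  have : (q + 1 : ℝ) ≠ 0 := by positivity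
  field_simp
  ring

lemma strictMono_of_gaps_pos {θ : Fin (q + 1) → ℝ} (h : ∀ j, 0 < gaps θ j) :
    StrictMono θ := by
  rw [Fin.strictMono_iff_lt_succ]
  intro i
  have := h i
  rw [gaps] at this
  linarith

end Stmt0
end PartB
section PartC
namespace Stmt0
open Real Set Function

variable {q : ℕ}

lemma emod_bounds (m : ℤ) : 0 ≤ m % ((q : ℤ) + 1) ∧ m % ((q : ℤ) + 1) < (q : ℤ) + 1 :=
  ⟨Int.emod_nonneg m (by positivity), Int.emod_lt_of_pos m (by positivity)⟩

lemma emod_toNat_lt (m : ℤ) : (m % ((q : ℤ) + 1)).toNat < q + 1 := by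
  have := emod_bounds (q := q) m
  omega

/-- Extension of a `Fin (q+1)`-tuple of reals to a `2π`-quasiperiodic function on `ℤ`. -/
def zext (θ : Fin (q + 1) → ℝ) (m : ℤ) : ℝ :=
  θ ⟨(m % ((q : ℤ) + 1)).toNat, emod_toNat_lt m⟩ + 2 * π * ((m / ((q : ℤ) + 1) : ℤ) : ℝ)

lemma zext_eq (θ : Fin (q + 1) → ℝ) (i : Fin (q + 1)) (k : ℤ) :
    zext θ ((i : ℤ) + ((q : ℤ) + 1) * k) = θ i + 2 * π * (k : ℝ) := by
  have h1 : ((i : ℤ) + ((q : ℤ) + 1) * k) % ((q : ℤ) + 1) = (i : ℤ) := by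
    rw [Int.add_mul_emod_self_left]
    exact Int.emod_eq_of_lt (by positivity) (by exact_mod_cast i.isLt)
  have h2 : ((i : ℤ) + ((q : ℤ) + 1) * k) / ((q : ℤ) + 1) = k := by
    rw [Int.add_mul_ediv_left _ _ (by omega : ((q : ℤ) + 1) ≠ 0)]
    rw [Int.ediv_eq_zero_of_lt (by positivity) (by exact_mod_cast i.isLt)]
    ring
  rw [zext]
  congr 1
  · congr 1
    apply Fin.ext
    simp [h1]
  · rw [h2]

lemma zext_coe (θ : Fin (q + 1) → ℝ) (i : Fin (q + 1)) : zext θ ((i : ℕ) : ℤ) = θ i := by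
  have := zext_eq θ i 0
  simpa using this

lemma zext_add_N (θ : Fin (q + 1) → ℝ) (m : ℤ) :
    zext θ (m + ((q : ℤ) + 1)) = zext θ m + 2 * π := by
  rw [zext, zext]
  have h1 : (m + ((q : ℤ) + 1)) % ((q : ℤ) + 1) = m % ((q : ℤ) + 1) := by
    conv_lhs => rw [show m + ((q : ℤ) + 1) = m + ((q : ℤ) + 1) * 1 by ring]
    rw [Int.add_mul_emod_self_left]
  have h2 : (m + ((q : ℤ) + 1)) / ((q : ℤ) + 1) = m / ((q : ℤ) + 1) + 1 := by
    conv_lhs => rw [show m + ((q : ℤ) + 1) = m + ((q : ℤ) + 1) * 1 by ring]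
    rw [Int.add_mul_ediv_left _ _ (by omega : ((q : ℤ) + 1) ≠ 0)]
  rw [h2]
  have h3 : (⟨((m + ((q : ℤ) + 1)) % ((q : ℤ) + 1)).toNat, emod_toNat_lt _⟩ : Fin (q + 1))
      = ⟨(m % ((q : ℤ) + 1)).toNat, emod_toNat_lt _⟩ := by
    apply Fin.ext; simp [h1]
  rw [h3]
  push_cast
  ring

lemma zext_strictMono {θ : Fin (q + 1) → ℝ} (hmono : StrictMono θ)
    (hwin : θ (Fin.last q) < θ 0 + 2 * π) : StrictMono (zext θ) := by
  apply strictMono_int_of_lt_succ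
  intro m
  have hb := emod_bounds (q := q) m
  set k : ℤ := m / ((q : ℤ) + 1) with hk
  set r : ℤ := m % ((q : ℤ) + 1) with hr
  have htn : (r.toNat : ℤ) = r := Int.toNat_of_nonneg hb.1
  have hdm : m = (r.toNat : ℤ) + ((q : ℤ) + 1) * k := by
    have h := Int.mul_ediv_add_emod m ((q : ℤ) + 1)
    rw [htn, hr, hk]
    linarith [h]
  by_cases hcase : r.toNat < q
  · have e1 : zext θ m = θ ⟨r.toNat, by omega⟩ + 2 * π * (k : ℝ) := by
      conv_lhs => rw [hdm]
      exact zext_eq θ ⟨r.toNat, by omega⟩ k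
    have e2 : zext θ (m + 1) = θ ⟨r.toNat + 1, by omega⟩ + 2 * π * (k : ℝ) := by
      have hm1 : m + 1 = (((⟨r.toNat + 1, by omega⟩ : Fin (q + 1)) : ℕ) : ℤ)
          + ((q : ℤ) + 1) * k := by
        push_cast
        linear_combination hdm
      rw [hm1]
      exact zext_eq θ ⟨r.toNat + 1, by omega⟩ k
    rw [e1, e2]
    have := hmono (show (⟨r.toNat, by omega⟩ : Fin (q + 1)) < ⟨r.toNat + 1, by omega⟩ from
      by simp [Fin.lt_def])
    linarith
  · have hrq : (r.toNat : ℤ) = (q : ℤ) := by omega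
    have e1 : zext θ m = θ (Fin.last q) + 2 * π * (k : ℝ) := by
      have hm : m = (((Fin.last q : Fin (q + 1)) : ℕ) : ℤ) + ((q : ℤ) + 1) * k := by
        simp only [Fin.val_last]
        linear_combination hdm + hrq
      conv_lhs => rw [hm]
      exact zext_eq θ (Fin.last q) k
    have e2 : zext θ (m + 1) = θ 0 + 2 * π * ((k + 1 : ℤ) : ℝ) := by
      have hm1 : m + 1 = (((0 : Fin (q + 1)) : ℕ) : ℤ) + ((q : ℤ) + 1) * (k + 1) := by
        simp only [Fin.val_zero]
        push_cast
        linear_combination hdm + hrq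
      rw [hm1]
      exact zext_eq θ 0 (k + 1)
    rw [e1, e2]
    push_cast
    linarith

lemma zext_sum_shift (θ : Fin (q + 1) → ℝ) (t : ℤ) :
    ∑ i : Fin (q + 1), zext θ (((i : ℕ) : ℤ) + t) = (∑ i, θ i) + 2 * π * (t : ℝ) := by
  have hfin : ∀ s : ℤ, ∑ i : Fin (q + 1), zext θ (((i : ℕ) : ℤ) + s)
      = ∑ i ∈ Finset.range (q + 1), zext θ ((i : ℤ) + s) := by
    intro s
    exact Fin.sum_univ_eq_sum_range (fun i => zext θ ((i : ℤ) + s)) (q + 1)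
  have key : ∀ s : ℤ, (∑ i ∈ Finset.range (q + 1), zext θ ((i : ℤ) + (s + 1)))
      = (∑ i ∈ Finset.range (q + 1), zext θ ((i : ℤ) + s)) + 2 * π := by
    intro s
    have h1 : ∀ i : ℕ, zext θ ((i : ℤ) + (s + 1)) = zext θ (((i + 1 : ℕ) : ℤ) + s) := by
      intro i; congr 1; push_cast; ring
    rw [Finset.sum_congr rfl fun i _ => h1 i]
    have h2 : ∑ i ∈ Finset.range (q + 2), zext θ ((i : ℤ) + s)
        = (∑ i ∈ Finset.range (q + 1), zext θ (((i + 1 : ℕ) : ℤ) + s)) + zext θ ((0 : ℤ) + s) := by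
      rw [Finset.sum_range_succ' (fun i => zext θ ((i : ℤ) + s)) (q + 1)]
      norm_num
    have h3 : ∑ i ∈ Finset.range (q + 2), zext θ ((i : ℤ) + s)
        = (∑ i ∈ Finset.range (q + 1), zext θ ((i : ℤ) + s)) + zext θ (((q + 1 : ℕ) : ℤ) + s) := by
      rw [Finset.sum_range_succ]
    have h4 : zext θ (((q + 1 : ℕ) : ℤ) + s) = zext θ ((0 : ℤ) + s) + 2 * π := by
      rw [show ((q + 1 : ℕ) : ℤ) + s = ((0 : ℤ) + s) + ((q : ℤ) + 1) by push_cast; ring]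
      exact zext_add_N θ _
    have := h2.symm.trans h3
    linarith [this, h4]
  have base : (∑ i ∈ Finset.range (q + 1), zext θ ((i : ℤ) + 0)) = ∑ i, θ i := by
    rw [← hfin 0]
    apply Finset.sum_congr rfl
    intro i _
    rw [show ((i : ℕ) : ℤ) + 0 = ((i : ℕ) : ℤ) by ring, zext_coe]
  rw [hfin t]
  induction t using Int.induction_on with
  | zero => simpa using base
  | succ n ih =>
    rw [key n, ih]
    push_cast; ring
  | pred n ih =>
    have hthis := key (-(n : ℤ) - 1)
    rw [show -(n : ℤ) - 1 + 1 = -(n : ℤ) from by ring] at hthis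
    push_cast at ih ⊢
    linarith [hthis]

lemma zext_exp (θ : Fin (q + 1) → ℝ) (m : ℤ) :
    Circle.exp (zext θ m) = Circle.exp (θ ⟨(m % ((q : ℤ) + 1)).toNat, emod_toNat_lt m⟩) := by
  rw [zext, Circle.exp_add]
  rw [show (2 * π * ((m / ((q : ℤ) + 1) : ℤ) : ℝ)) = 2 * π * ((m / ((q : ℤ) + 1) : ℤ) : ℝ) from rfl]
  rw [Circle.exp_two_pi_mul_int]
  simp

lemma range_zext (θ : Fin (q + 1) → ℝ) :
    range (zext θ) = {x : ℝ | ∃ (i : Fin (q + 1)) (k : ℤ), x = θ i + 2 * π * (k : ℝ)} := by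
  ext x
  constructor
  · rintro ⟨m, rfl⟩
    exact ⟨_, m / ((q : ℤ) + 1), rfl⟩
  · rintro ⟨i, k, rfl⟩
    exact ⟨(i : ℤ) + ((q : ℤ) + 1) * k, zext_eq θ i k⟩

end Stmt0
end PartC
section PartD
namespace Stmt0
open Real Set Function

variable {q : ℕ}

lemma int_mono_surj_eq (e : ℤ → ℤ) (hmono : StrictMono e) (hsurj : Surjective e) :
    ∀ n, e n = n + e 0 := by
  have hstep : ∀ n, e (n + 1) = e n + 1 := by
    intro n
    have h1 : e n < e (n + 1) := hmono (lt_add_one n)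
    by_contra hne
    have h2 : e n + 1 < e (n + 1) := by omega
    obtain ⟨m, hm⟩ := hsurj (e n + 1)
    have hnm : n < m := hmono.lt_iff_lt.mp (by omega)
    have hmn : m < n + 1 := hmono.lt_iff_lt.mp (by omega)
    omega
  intro n
  induction n using Int.induction_on with
  | zero => ring
  | succ k ih => rw [hstep k, ih]; ring
  | pred k ih =>
    have := hstep (-(k : ℤ) - 1)
    rw [show -(k : ℤ) - 1 + 1 = -(k : ℤ) from by ring] at this
    omega

lemma exists_translation {Γ Γ' : ℤ → ℝ} (hΓ : StrictMono Γ) (hΓ' : StrictMono Γ')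
    (hr : range Γ = range Γ') : ∃ t : ℤ, ∀ m, Γ' m = Γ (m + t) := by
  have h1 : ∀ n, ∃ j, Γ j = Γ' n := by
    intro n
    have : Γ' n ∈ range Γ := by rw [hr]; exact mem_range_self n
    exact this
  choose e he using h1
  have hemono : StrictMono e := by
    intro n m hnm
    have : Γ (e n) < Γ (e m) := by rw [he n, he m]; exact hΓ' hnm
    exact hΓ.lt_iff_lt.mp this
  have hesurj : Surjective e := by
    intro m
    have : Γ m ∈ range Γ' := by rw [← hr]; exact mem_range_self m
    obtain ⟨n, hn⟩ := this
    exact ⟨n, hΓ.injective (by rw [he n, hn])⟩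
  refine ⟨e 0, fun m => ?_⟩
  rw [← he m, int_mono_surj_eq e hemono hesurj m]

lemma circle_exp_sum {ι : Type*} (s : Finset ι) (f : ι → ℝ) :
    Circle.exp (∑ i ∈ s, f i) = ∏ i ∈ s, Circle.exp (f i) := by
  classical
  induction s using Finset.induction_on with
  | empty => simp
  | insert _ _ h ih => rw [Finset.sum_insert h, Finset.prod_insert h, Circle.exp_add, ih]

lemma exp_tuple_injective {θ : Fin (q + 1) → ℝ} (hmono : StrictMono θ)
    (hwin : θ (Fin.last q) < θ 0 + 2 * π) :
    Function.Injective fun i => Circle.exp (θ i) := by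
  have key : ∀ i j : Fin (q + 1), i < j → Circle.exp (θ i) ≠ Circle.exp (θ j) := by
    intro i j hij heq
    obtain ⟨m, hm⟩ := Circle.exp_eq_exp.mp heq
    have hlt : θ i < θ j := hmono hij
    have hπ := Real.pi_pos
    have hm1 : m ≤ -1 := by
      by_contra h
      have : 0 ≤ m := by omega
      have : (0 : ℝ) ≤ (m : ℝ) := by exact_mod_cast this
      nlinarith
    have hm1' : (m : ℝ) ≤ -1 := by exact_mod_cast hm1
    have hb1 : θ j ≤ θ (Fin.last q) := hmono.monotone (Fin.le_last j)
    have hb2 : θ 0 ≤ θ i := hmono.monotone (Fin.zero_le i)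
    nlinarith
  intro i j hij
  rcases lt_trichotomy i j with h | h | h
  · exact absurd hij (key i j h)
  · exact h
  · exact absurd hij.symm (key j i h)

/-- The ordered configuration given by a suitable angle tuple. -/
def mkO (θ : Fin (q + 1) → ℝ) (hmono : StrictMono θ)
    (hwin : θ (Fin.last q) < θ 0 + 2 * π) : OConf Circle (q + 1) :=
  ⟨fun i => Circle.exp (θ i), exp_tuple_injective hmono hwin⟩

/-- Cyclic shift permutation of `Fin (q+1)` by an integer. -/
def shiftPerm (q : ℕ) (m : ℤ) : Equiv.Perm (Fin (q + 1)) where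
  toFun i := ⟨((((i : ℕ) : ℤ) + m) % ((q : ℤ) + 1)).toNat, emod_toNat_lt _⟩
  invFun i := ⟨((((i : ℕ) : ℤ) - m) % ((q : ℤ) + 1)).toNat, emod_toNat_lt _⟩
  left_inv i := by
    apply Fin.ext
    have hb := emod_bounds (q := q) (((i : ℕ) : ℤ) + m)
    show ((((((((i : ℕ) : ℤ) + m) % ((q : ℤ) + 1)).toNat : ℕ) : ℤ) - m) % ((q : ℤ) + 1)).toNat
        = (i : ℕ)
    rw [Int.toNat_of_nonneg hb.1]
    rw [Int.sub_emod, Int.emod_emod_of_dvd _ dvd_rfl, ← Int.sub_emod]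
    rw [add_sub_cancel_right]
    rw [Int.emod_eq_of_lt (by positivity) (by exact_mod_cast i.isLt)]
    simp
  right_inv i := by
    apply Fin.ext
    have hb := emod_bounds (q := q) (((i : ℕ) : ℤ) - m)
    show ((((((((i : ℕ) : ℤ) - m) % ((q : ℤ) + 1)).toNat : ℕ) : ℤ) + m) % ((q : ℤ) + 1)).toNat
        = (i : ℕ)
    rw [Int.toNat_of_nonneg hb.1]
    rw [Int.add_emod, Int.emod_emod_of_dvd _ dvd_rfl, ← Int.add_emod]
    rw [sub_add_cancel]
    rw [Int.emod_eq_of_lt (by positivity) (by exact_mod_cast i.isLt)]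
    simp

lemma exists_rep (f : OConf Circle (q + 1)) (s : ℝ) (hs : Circle.exp s = ∏ i, f.1 i) :
    ∃ θ : Fin (q + 1) → ℝ, StrictMono θ ∧ θ (Fin.last q) < θ 0 + 2 * π ∧ (∑ i, θ i) = s ∧
      ∃ σ : Equiv.Perm (Fin (q + 1)), (fun i => Circle.exp (θ i)) = f.1 ∘ σ := by
  set α : Fin (q + 1) → ℝ := fun i => Complex.arg (f.1 i : ℂ) with hα
  have hαinj : Injective α := by
    intro i j h
    exact f.2 (Circle.injective_arg h)
  set σ0 := Tuple.sort α with hσ0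
  set β := α ∘ σ0 with hβ
  have hβmono : StrictMono β :=
    (Tuple.monotone_sort α).strictMono_of_injective (hαinj.comp σ0.injective)
  have hβIoc : ∀ i, β i ∈ Ioc (-π) π := fun i => ⟨Complex.neg_pi_lt_arg _, Complex.arg_le_pi _⟩
  have hπ := Real.pi_pos
  have hβwin : β (Fin.last q) < β 0 + 2 * π := by
    have ha := (hβIoc (Fin.last q)).2
    have hb := (hβIoc 0).1
    linarith
  have hexpβ : ∀ i, Circle.exp (β i) = f.1 (σ0 i) := fun i => Circle.exp_arg _
  have hsum : Circle.exp (∑ i, β i) = Circle.exp s := by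
    rw [circle_exp_sum, Finset.prod_congr rfl fun i _ => hexpβ i, Equiv.prod_comp σ0 f.1, hs]
  obtain ⟨m, hm⟩ := Circle.exp_eq_exp.mp hsum
  refine ⟨fun i => zext β (((i : ℕ) : ℤ) + (-m)), ?_, ?_, ?_, ?_⟩
  · intro i j hij
    exact zext_strictMono hβmono hβwin (by
      have : (i : ℕ) < (j : ℕ) := hij
      omega)
  · show zext β ((((Fin.last q : Fin (q + 1)) : ℕ) : ℤ) + (-m))
        < zext β ((((0 : Fin (q + 1)) : ℕ) : ℤ) + (-m)) + 2 * π
    rw [← zext_add_N β]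
    apply zext_strictMono hβmono hβwin
    simp only [Fin.val_last, Fin.val_zero]
    omega
  · show (∑ i : Fin (q + 1), zext β (((i : ℕ) : ℤ) + (-m))) = s
    rw [zext_sum_shift β (-m)]
    push_cast
    linarith
  · refine ⟨(shiftPerm q (-m)).trans σ0, funext fun i => ?_⟩
    show Circle.exp (zext β (((i : ℕ) : ℤ) + (-m))) = f.1 (σ0 (shiftPerm q (-m) i))
    rw [zext_exp]
    exact hexpβ _

lemma rep_unique {a : ℝ} {θ θ' : Fin (q + 1) → ℝ}
    (h1 : StrictMono θ) (h2 : θ (Fin.last q) < θ 0 + 2 * π)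
    (h3 : (∑ i, θ i) ∈ Ioo (a - π) (a + π))
    (h1' : StrictMono θ') (h2' : θ' (Fin.last q) < θ' 0 + 2 * π)
    (h3' : (∑ i, θ' i) ∈ Ioo (a - π) (a + π))
    (σ : Equiv.Perm (Fin (q + 1))) (hrel : ∀ i, Circle.exp (θ' i) = Circle.exp (θ (σ i))) :
    θ' = θ := by
  have hπ := Real.pi_pos
  have hk : ∀ i, ∃ k : ℤ, θ' i = θ (σ i) + 2 * π * (k : ℝ) := by
    intro i
    obtain ⟨k, hk⟩ := Circle.exp_eq_exp.mp (hrel i)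
    exact ⟨k, by linarith [hk]⟩
  choose k hk using hk
  have hrange : range (zext θ) = range (zext θ') := by
    rw [range_zext, range_zext]
    ext x
    constructor
    · rintro ⟨i, l, rfl⟩
      refine ⟨σ.symm i, l - k (σ.symm i), ?_⟩
      have := hk (σ.symm i)
      rw [Equiv.apply_symm_apply] at this
      rw [this]
      push_cast
      ring
    · rintro ⟨i, l, rfl⟩
      refine ⟨σ i, k i + l, ?_⟩
      rw [hk i]
      push_cast
      ring
  obtain ⟨t, ht⟩ := exists_translation (zext_strictMono h1 h2) (zext_strictMono h1' h2') hrange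
  have hsum' : (∑ i, θ' i) = (∑ i, θ i) + 2 * π * (t : ℝ) := by
    calc (∑ i, θ' i) = ∑ i : Fin (q + 1), zext θ' ((i : ℕ) : ℤ) := by
          exact (Finset.sum_congr rfl fun i _ => (zext_coe θ' i).symm)
      _ = ∑ i : Fin (q + 1), zext θ (((i : ℕ) : ℤ) + t) := by
          exact Finset.sum_congr rfl fun i _ => ht _
      _ = (∑ i, θ i) + 2 * π * (t : ℝ) := zext_sum_shift θ t
  have htz : t = 0 := by
    obtain ⟨l1, r1⟩ := h3
    obtain ⟨l1', r1'⟩ := h3'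
    have hb1 : (t : ℝ) < 1 := by nlinarith
    have hb2 : (-1 : ℝ) < (t : ℝ) := by nlinarith
    have : t < 1 := by exact_mod_cast hb1
    have : -1 < t := by exact_mod_cast hb2
    omega
  funext i
  have := ht ((i : ℕ) : ℤ)
  rw [htz, add_zero] at this
  rw [← zext_coe θ' i, this, zext_coe]

end Stmt0
end PartD
section PartE
namespace Stmt0
open Real Set Function

variable {q : ℕ}

/-! ### The fiber model: `ℝ^q ≃ open simplex` -/

/-- Homeomorphism from `ℝ^q` onto the open simplex `{d | d > 0, ∑ d < 2π}`. -/
def gmap (y : Fin q → ℝ) : Fin q → ℝ :=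
  fun j => 2 * π * Real.exp (y j) / (1 + ∑ l, Real.exp (y l))

/-- Inverse of `gmap`. -/
def ginv (d : Fin q → ℝ) : Fin q → ℝ :=
  fun j => Real.log (d j / (2 * π - ∑ l, d l))

lemma one_add_sumExp_pos (y : Fin q → ℝ) : 0 < 1 + ∑ l, Real.exp (y l) := by
  have : (0 : ℝ) ≤ ∑ l, Real.exp (y l) :=
    Finset.sum_nonneg fun l _ => (Real.exp_pos _).le
  linarith

lemma gmap_pos (y : Fin q → ℝ) (j : Fin q) : 0 < gmap y j := by
  have h1 := one_add_sumExp_pos y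
  have h2 := Real.exp_pos (y j)
  have hπ := Real.pi_pos
  exact div_pos (by positivity) h1

lemma gmap_sum_lt (y : Fin q → ℝ) : ∑ j, gmap y j < 2 * π := by
  have h1 := one_add_sumExp_pos y
  have hπ := Real.pi_pos
  have hsum : ∑ j, gmap y j
      = 2 * π * (∑ l, Real.exp (y l)) / (1 + ∑ l, Real.exp (y l)) := by
    simp only [gmap]
    rw [← Finset.sum_div, ← Finset.mul_sum]
  rw [hsum, div_lt_iff₀ h1]
  have : (0 : ℝ) ≤ ∑ l, Real.exp (y l) :=
    Finset.sum_nonneg fun l _ => (Real.exp_pos _).le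
  nlinarith

lemma ginv_gmap (y : Fin q → ℝ) : ginv (gmap y) = y := by
  funext j
  have h1 := one_add_sumExp_pos y
  have hπ := Real.pi_pos
  rw [ginv]
  have hsum : ∑ l, gmap y l
      = 2 * π * (∑ l, Real.exp (y l)) / (1 + ∑ l, Real.exp (y l)) := by
    simp only [gmap]
    rw [← Finset.sum_div, ← Finset.mul_sum]
  rw [hsum]
  simp only [gmap]
  have harg : 2 * π * Real.exp (y j) / (1 + ∑ l, Real.exp (y l)) /
      (2 * π - 2 * π * (∑ l, Real.exp (y l)) / (1 + ∑ l, Real.exp (y l)))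
      = Real.exp (y j) := by
    rw [div_div]
    rw [show (2 * π - 2 * π * (∑ l, Real.exp (y l)) / (1 + ∑ l, Real.exp (y l)))
        = 2 * π / (1 + ∑ l, Real.exp (y l)) from by field_simp; ring]
    field_simp
  rw [harg, Real.log_exp]

lemma gmap_ginv {d : Fin q → ℝ} (hd : ∀ j, 0 < d j) (hsum : ∑ l, d l < 2 * π) :
    gmap (ginv d) = d := by
  funext j
  have hT : 0 < 2 * π - ∑ l, d l := by linarith
  have hexp : ∀ l, Real.exp (ginv d l) = d l / (2 * π - ∑ l', d l') := by
    intro l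
    rw [ginv, Real.exp_log (div_pos (hd l) hT)]
  rw [gmap]
  rw [Finset.sum_congr rfl fun l _ => hexp l, hexp j]
  rw [← Finset.sum_div]
  have hπ := Real.pi_pos
  have h2 : 1 + (∑ l, d l) / (2 * π - ∑ l, d l) = 2 * π / (2 * π - ∑ l, d l) := by
    field_simp
    ring
  rw [h2]
  field_simp

lemma continuous_gmap : Continuous (gmap (q := q)) := by
  apply continuous_pi
  intro j
  apply Continuous.div
  · exact continuous_const.mul (Real.continuous_exp.comp (continuous_apply j))
  · exact continuous_const.add (continuous_finset_sum _ fun l _ =>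
      Real.continuous_exp.comp (continuous_apply l))
  · intro y
    exact ne_of_gt (one_add_sumExp_pos y)

lemma continuousAt_ginv {d : Fin q → ℝ} (hd : ∀ j, 0 < d j) (hsum : ∑ l, d l < 2 * π) :
    ContinuousAt (ginv (q := q)) d := by
  have hT : 0 < 2 * π - ∑ l, d l := by linarith
  rw [continuousAt_pi]
  intro j
  simp only [ginv]
  have hdiv : ContinuousAt (fun y : Fin q → ℝ => y j / (2 * π - ∑ l, y l)) d :=
    ContinuousAt.div ((continuous_apply j).continuousAt)
      ((continuous_const.sub (continuous_finset_sum _ fun l _ => continuous_apply l)).continuousAt)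
      (ne_of_gt hT)
  exact hdiv.log (ne_of_gt (div_pos (hd j) hT))

/-! ### Arc coordinates on the circle -/

/-- The canonical angle of `w` in the arc around `Circle.exp a`. -/
def sNum (a : ℝ) (w : Circle) : ℝ := a + Complex.arg ((w * (Circle.exp a)⁻¹ : Circle) : ℂ)

lemma exp_sNum (a : ℝ) (w : Circle) : Circle.exp (sNum a w) = w := by
  rw [sNum, Circle.exp_add, Circle.exp_arg]
  rw [mul_comm, mul_assoc, inv_mul_cancel, mul_one]

lemma sNum_mem {a : ℝ} {w : Circle} (hw : w ≠ Circle.exp (a + π)) :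
    sNum a w ∈ Ioo (a - π) (a + π) := by
  have h1 : Complex.arg ((w * (Circle.exp a)⁻¹ : Circle) : ℂ) ≤ π := Complex.arg_le_pi _
  have h2 : -π < Complex.arg ((w * (Circle.exp a)⁻¹ : Circle) : ℂ) := Complex.neg_pi_lt_arg _
  have h3 : Complex.arg ((w * (Circle.exp a)⁻¹ : Circle) : ℂ) ≠ π := by
    intro h
    apply hw
    have : Circle.exp π = w * (Circle.exp a)⁻¹ := by
      rw [← h, Circle.exp_arg]
    rw [Circle.exp_add, this]
    rw [mul_comm, mul_assoc, inv_mul_cancel, mul_one]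
  constructor
  · simp only [sNum]; linarith
  · simp only [sNum]
    have : Complex.arg ((w * (Circle.exp a)⁻¹ : Circle) : ℂ) < π := lt_of_le_of_ne h1 h3
    linarith

lemma sNum_exp {a s : ℝ} (hs : s ∈ Ioo (a - π) (a + π)) : sNum a (Circle.exp s) = s := by
  rw [sNum]
  have h1 : Circle.exp s * (Circle.exp a)⁻¹ = Circle.exp (s - a) := by
    rw [show s - a = s + (-a) from by ring, Circle.exp_add, Circle.exp_neg]
  rw [h1, Circle.arg_exp (by obtain ⟨l, r⟩ := hs; linarith) (by obtain ⟨l, r⟩ := hs; linarith)]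
  ring

lemma exp_ne_of_mem {a s : ℝ} (hs : s ∈ Ioo (a - π) (a + π)) :
    Circle.exp s ≠ Circle.exp (a + π) := by
  intro h
  obtain ⟨m, hm⟩ := Circle.exp_eq_exp.mp h
  obtain ⟨l, r⟩ := hs
  have hπ := Real.pi_pos
  have hm0 : (m : ℝ) < 0 := by nlinarith
  have hm1 : (-1 : ℝ) < (m : ℝ) := by nlinarith
  have : m < 0 := by exact_mod_cast hm0
  have : -1 < m := by exact_mod_cast hm1
  omega

lemma circle_mem_slitPlane {u : Circle} (h : (u : ℂ) ≠ -1) : (u : ℂ) ∈ Complex.slitPlane := by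
  rw [Complex.mem_slitPlane_iff]
  by_cases him : (u : ℂ).im = 0
  · left
    have habs : ‖(u : ℂ)‖ = 1 := Circle.norm_coe u
    have hnsq : (u : ℂ).re ^ 2 + (u : ℂ).im ^ 2 = 1 := by
      have := Complex.sq_norm (u : ℂ)
      rw [habs, Complex.normSq_apply] at this
      nlinarith [this]
    have hre : (u : ℂ).re = 1 ∨ (u : ℂ).re = -1 := by
      have : ((u : ℂ).re - 1) * ((u : ℂ).re + 1) = 0 := by nlinarith
      rcases mul_eq_zero.mp this with h' | h'
      · left; linarith
      · right; linarith
    rcases hre with h' | h'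
    · linarith
    · exfalso
      apply h
      apply Complex.ext
      · simp [h']
      · simp [him]
  · right; exact him

lemma coe_exp_pi : ((Circle.exp π : Circle) : ℂ) = -1 := by
  rw [Circle.coe_exp]
  simpa using Complex.exp_pi_mul_I

lemma continuousAt_sNum {a : ℝ} {w : Circle} (hw : w ≠ Circle.exp (a + π)) :
    ContinuousAt (sNum a) w := by
  have hne : ((w * (Circle.exp a)⁻¹ : Circle) : ℂ) ≠ -1 := by
    intro h
    apply hw
    have : (w * (Circle.exp a)⁻¹ : Circle) = Circle.exp π := by
      apply Circle.ext
      rw [h, coe_exp_pi]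
    calc w = w * (Circle.exp a)⁻¹ * Circle.exp a := by group
      _ = Circle.exp π * Circle.exp a := by rw [this]
      _ = Circle.exp (a + π) := by rw [← Circle.exp_add]; ring_nf
  have hcont : Continuous fun v : Circle => ((v * (Circle.exp a)⁻¹ : Circle) : ℂ) :=
    continuous_subtype_val.comp (continuous_mul_right _)
  have harg : ContinuousAt (fun v : Circle => Complex.arg ((v * (Circle.exp a)⁻¹ : Circle) : ℂ)) w :=
    ContinuousAt.comp (x := w) (g := Complex.arg)
      (f := fun v : Circle => ((v * (Circle.exp a)⁻¹ : Circle) : ℂ))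
      (Complex.continuousAt_arg (circle_mem_slitPlane hne)) hcont.continuousAt
  exact continuousAt_const.add harg

end Stmt0
end PartE
section PartF
namespace Stmt0
open Real Set Function

variable {q : ℕ} {a : ℝ}

/-- The canonical open set of angle tuples over the arc centered at `Circle.exp a`. -/
def VSet (q : ℕ) (a : ℝ) : Set (Fin (q + 1) → ℝ) :=
  {θ | (∀ j, 0 < gaps θ j) ∧ (∑ j, gaps θ j) < 2 * π ∧ (∑ i, θ i) ∈ Ioo (a - π) (a + π)}

lemma VSet_mono {θ : Fin (q + 1) → ℝ} (h : θ ∈ VSet q a) : StrictMono θ :=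
  strictMono_of_gaps_pos h.1

lemma VSet_win {θ : Fin (q + 1) → ℝ} (h : θ ∈ VSet q a) :
    θ (Fin.last q) < θ 0 + 2 * π := by
  have h1 := h.2.1
  rw [sum_gaps] at h1
  linarith

lemma mem_VSet_of {θ : Fin (q + 1) → ℝ} (hmono : StrictMono θ)
    (hwin : θ (Fin.last q) < θ 0 + 2 * π) (hsum : (∑ i, θ i) ∈ Ioo (a - π) (a + π)) :
    θ ∈ VSet q a := by
  refine ⟨fun j => ?_, ?_, hsum⟩
  · have := hmono (Fin.castSucc_lt_succ (i := j))
    rw [gaps]; linarith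
  · rw [sum_gaps]; linarith

lemma VSet_isOpen : IsOpen (VSet q a) := by
  have h1 : IsOpen {θ : Fin (q + 1) → ℝ | ∀ j, 0 < gaps θ j} := by
    have he : {θ : Fin (q + 1) → ℝ | ∀ j, 0 < gaps θ j}
        = ⋂ j, {θ : Fin (q + 1) → ℝ | 0 < gaps θ j} := by
      ext θ; simp
    rw [he]
    exact isOpen_iInter_of_finite fun j =>
      isOpen_lt continuous_const ((continuous_apply j.succ).sub (continuous_apply j.castSucc))
  have h2 : IsOpen {θ : Fin (q + 1) → ℝ | (∑ j, gaps θ j) < 2 * π} :=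
    isOpen_lt (continuous_finset_sum _ fun j _ =>
      (continuous_apply j.succ).sub (continuous_apply j.castSucc)) continuous_const
  have h3 : IsOpen {θ : Fin (q + 1) → ℝ | (∑ i, θ i) ∈ Ioo (a - π) (a + π)} :=
    IsOpen.preimage (continuous_finset_sum _ fun i _ => continuous_apply i) isOpen_Ioo
  exact h1.inter (h2.inter h3)

/-- The map from canonical angle tuples to unordered configurations. -/
def VtoU (θ : {θ : Fin (q + 1) → ℝ // θ ∈ VSet q a}) : UConf Circle (q + 1) :=
  Quotient.mk (confSetoid Circle (q + 1)) (mkO θ.1 (VSet_mono θ.2) (VSet_win θ.2))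

lemma continuous_VtoU : Continuous (VtoU (q := q) (a := a)) := by
  apply Continuous.comp continuous_quotient_mk'
  apply Continuous.subtype_mk
  exact continuous_pi fun i =>
    Circle.exp.continuous.comp ((continuous_apply i).comp continuous_subtype_val)

lemma injective_VtoU : Injective (VtoU (q := q) (a := a)) := by
  intro θ θ' h
  obtain ⟨σ, hσ⟩ := Quotient.exact h
  apply Subtype.ext
  exact rep_unique (VSet_mono θ'.2) (VSet_win θ'.2) θ'.2.2.2
    (VSet_mono θ.2) (VSet_win θ.2) θ.2.2.2 σ (fun i => congrFun hσ i)

/-- Pointwise exponential of an angle tuple. -/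
def expPi : (Fin (q + 1) → ℝ) → (Fin (q + 1) → Circle) := fun θ i => Circle.exp (θ i)

lemma isOpenMap_expPi : IsOpenMap (expPi (q := q)) :=
  IsOpenMap.piMap (fun _ => isLocalHomeomorph_circleExp.isOpenMap)
    (Filter.Eventually.of_forall fun _ => fun z => ⟨Complex.arg z, Circle.exp_arg z⟩)

lemma isOpenMap_VtoU : IsOpenMap (VtoU (q := q) (a := a)) := by
  have hfac : VtoU (q := q) (a := a) = (Quotient.mk (confSetoid Circle (q + 1))) ∘
      (fun θ : {θ : Fin (q + 1) → ℝ // θ ∈ VSet q a} =>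
        (⟨expPi θ.1, exp_tuple_injective (VSet_mono θ.2) (VSet_win θ.2)⟩
          : OConf Circle (q + 1))) := rfl
  rw [hfac]
  apply IsOpenMap.comp isOpenMap_mk
  intro O hO
  obtain ⟨O₁, hO₁, rfl⟩ := isOpen_induced_iff.mp hO
  have himg : (fun θ : {θ : Fin (q + 1) → ℝ // θ ∈ VSet q a} =>
        (⟨expPi θ.1, exp_tuple_injective (VSet_mono θ.2) (VSet_win θ.2)⟩
          : OConf Circle (q + 1))) '' (Subtype.val ⁻¹' O₁)
      = Subtype.val ⁻¹' (expPi '' (O₁ ∩ VSet q a)) := by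
    ext x
    constructor
    · rintro ⟨θ, hθ, rfl⟩
      exact ⟨θ.1, ⟨hθ, θ.2⟩, rfl⟩
    · rintro ⟨θ₀, ⟨hθ₀O, hθ₀V⟩, hx⟩
      refine ⟨⟨θ₀, hθ₀V⟩, hθ₀O, ?_⟩
      apply Subtype.ext
      exact hx
  refine himg ▸ ?_
  exact continuous_subtype_val.isOpen_preimage _ (isOpenMap_expPi _ (hO₁.inter VSet_isOpen))

end Stmt0
end PartF
section PartG
namespace Stmt0
open Real Set Function

variable {q : ℕ} {a : ℝ}

def USet (a : ℝ) : Set Circle := {w : Circle | w ≠ Circle.exp (a + π)}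

lemma USet_isOpen : IsOpen (USet a) := isOpen_compl_singleton

lemma projU_VtoU (θ : {θ : Fin (q + 1) → ℝ // θ ∈ VSet q a}) :
    projU (VtoU θ) = Circle.exp (∑ i, θ.1 i) := by
  show projO (mkO θ.1 (VSet_mono θ.2) (VSet_win θ.2)) = _
  rw [projO, circle_exp_sum]
  rfl

lemma range_VtoU : range (VtoU (q := q) (a := a)) = projU ⁻¹' (USet a) := by
  ext x
  constructor
  · rintro ⟨θ, rfl⟩
    rw [mem_preimage, projU_VtoU]
    exact exp_ne_of_mem θ.2.2.2
  · intro hx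
    obtain ⟨f, rfl⟩ := Quotient.exists_rep x
    have hne : projO f ≠ Circle.exp (a + π) := hx
    have hs : Circle.exp (sNum a (projO f)) = ∏ i, f.1 i := exp_sNum a (projO f)
    obtain ⟨θ, hmono, hwin, hsum, σ, hrel⟩ := exists_rep f (sNum a (projO f)) hs
    have hIoo : (∑ i, θ i) ∈ Ioo (a - π) (a + π) := hsum ▸ sNum_mem hne
    exact ⟨⟨θ, mem_VSet_of hmono hwin hIoo⟩, Quotient.sound ⟨σ, hrel⟩⟩

lemma mkTheta_mem_VSet {s : ℝ} (hs : s ∈ Ioo (a - π) (a + π)) (y : Fin q → ℝ) :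
    mkTheta s (gmap y) ∈ VSet q a := by
  refine ⟨fun j => ?_, ?_, ?_⟩
  · rw [gaps_mkTheta]; exact gmap_pos y j
  · rw [gaps_mkTheta]; exact gmap_sum_lt y
  · rw [sum_mkTheta]; exact hs

lemma continuous_dext (j : ℕ) : Continuous fun d : Fin q → ℝ => dext d j := by
  rcases Nat.lt_or_ge j q with h | h
  · simp only [dext, dif_pos h]
    exact continuous_apply _
  · simp only [dext, dif_neg (by omega : ¬ j < q)]
    exact continuous_const

lemma continuous_psum (i : ℕ) : Continuous fun d : Fin q → ℝ => psum d i := by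
  unfold psum
  exact continuous_finset_sum _ fun j _ => continuous_dext j

lemma continuous_csum : Continuous fun d : Fin q → ℝ => csum d := by
  unfold csum
  exact continuous_finset_sum _ fun i _ => continuous_psum _

lemma continuous_mkTheta : Continuous fun x : ℝ × (Fin q → ℝ) => mkTheta x.1 x.2 := by
  apply continuous_pi
  intro i
  unfold mkTheta
  exact (((continuous_fst.sub (continuous_csum.comp continuous_snd)).div_const _).add
    ((continuous_psum _).comp continuous_snd))

lemma continuous_gaps : Continuous (gaps (q := q)) := by
  apply continuous_pi
  intro j
  exact (continuous_apply j.succ).sub (continuous_apply j.castSucc)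

/-- The homeomorphism between the product chart and the set of canonical angle tuples. -/
def SVhomeo (q : ℕ) (a : ℝ) :
    {u : Circle × (Fin q → ℝ) // u ∈ (USet a) ×ˢ (univ : Set (Fin q → ℝ))} ≃ₜ
      {θ : Fin (q + 1) → ℝ // θ ∈ VSet q a} where
  toFun u := ⟨mkTheta (sNum a u.1.1) (gmap u.1.2), mkTheta_mem_VSet (sNum_mem u.2.1) u.1.2⟩
  invFun θ := ⟨(Circle.exp (∑ i, θ.1 i), ginv (gaps θ.1)),
    ⟨exp_ne_of_mem θ.2.2.2, mem_univ _⟩⟩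
  left_inv u := by
    apply Subtype.ext
    apply Prod.ext
    · show Circle.exp (∑ i, mkTheta (sNum a u.1.1) (gmap u.1.2) i) = u.1.1
      rw [sum_mkTheta, exp_sNum]
    · show ginv (gaps (mkTheta (sNum a u.1.1) (gmap u.1.2))) = u.1.2
      rw [gaps_mkTheta, ginv_gmap]
  right_inv θ := by
    apply Subtype.ext
    show mkTheta (sNum a (Circle.exp (∑ i, θ.1 i))) (gmap (ginv (gaps θ.1))) = θ.1
    rw [sNum_exp θ.2.2.2, gmap_ginv θ.2.1 θ.2.2.1, mkTheta_gaps]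
  continuous_toFun := by
    apply Continuous.subtype_mk
    have hsnum : Continuous fun u : {u : Circle × (Fin q → ℝ) //
        u ∈ (USet a) ×ˢ (univ : Set (Fin q → ℝ))} => sNum a u.1.1 := by
      rw [continuous_iff_continuousAt]
      intro u
      have hU : u.1.1 ≠ Circle.exp (a + π) := u.2.1
      exact ((continuousAt_sNum hU).comp continuous_fst.continuousAt).comp
        continuous_subtype_val.continuousAt
    have hg : Continuous fun u : {u : Circle × (Fin q → ℝ) //
        u ∈ (USet a) ×ˢ (univ : Set (Fin q → ℝ))} => gmap u.1.2 :=
      continuous_gmap.comp (continuous_snd.comp continuous_subtype_val)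
    exact continuous_mkTheta.comp (hsnum.prodMk hg)
  continuous_invFun := by
    apply Continuous.subtype_mk
    apply Continuous.prodMk
    · exact Circle.exp.continuous.comp
        (continuous_finset_sum _ fun i _ => (continuous_apply i).comp continuous_subtype_val)
    · rw [continuous_iff_continuousAt]
      intro θ
      exact ((continuousAt_ginv θ.2.1 θ.2.2.1).comp continuous_gaps.continuousAt).comp
        continuous_subtype_val.continuousAt

end Stmt0
end PartG
section Final
open Real Set Function Topology

/-- for `p ≥ 1` the configuration space `B(S¹, p)` of unordered `p`-element
subsets of the circle is the total space of a locally trivial fiber bundle over `S¹` whose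
fiber is (homeomorphic to) `ℝ^(p-1)`. -/
theorem statement0 (p : ℕ) (hp : 1 ≤ p) :
    ∃ proj : UConf Circle p → Circle, Continuous proj ∧
      ∀ b : Circle, ∃ e : Bundle.Trivialization (Fin (p - 1) → ℝ) proj, b ∈ e.baseSet := by
  obtain ⟨q, rfl⟩ : ∃ q, p = q + 1 := ⟨p - 1, by omega⟩
  refine ⟨Stmt0.projU, Stmt0.continuous_projU, fun b => ?_⟩
  classical
  set a := Complex.arg (b : ℂ) with ha
  have hπ := Real.pi_pos
  have hb : Circle.exp a = b := Circle.exp_arg b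
  have hbU : b ∈ Stmt0.USet a := by
    rw [← hb]
    exact Stmt0.exp_ne_of_mem ⟨by linarith, by linarith⟩
  haveI hne : Nonempty {u : Circle × (Fin q → ℝ) //
      u ∈ (Stmt0.USet a) ×ˢ (Set.univ : Set (Fin q → ℝ))} :=
    ⟨⟨(b, 0), ⟨hbU, Set.mem_univ _⟩⟩⟩
  set G : {u : Circle × (Fin q → ℝ) //
      u ∈ (Stmt0.USet a) ×ˢ (Set.univ : Set (Fin q → ℝ))} → UConf Circle (q + 1) :=
    Stmt0.VtoU ∘ (Stmt0.SVhomeo q a) with hGdef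
  have hGoe : IsOpenEmbedding G :=
    (IsOpenEmbedding.of_continuous_injective_isOpenMap Stmt0.continuous_VtoU
      Stmt0.injective_VtoU Stmt0.isOpenMap_VtoU).comp (Stmt0.SVhomeo q a).isOpenEmbedding
  have hrange : Set.range G = Stmt0.projU ⁻¹' (Stmt0.USet a) := by
    rw [hGdef, Set.range_comp, Homeomorph.range_coe, Set.image_univ, Stmt0.range_VtoU]
  set Gpe := hGoe.toOpenPartialHomeomorph G with hGpe
  set Sopens : TopologicalSpace.Opens (Circle × (Fin q → ℝ)) :=
    ⟨(Stmt0.USet a) ×ˢ Set.univ, Stmt0.USet_isOpen.prod isOpen_univ⟩ with hSopens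
  set Spe := Sopens.openPartialHomeomorphSubtypeCoe hne with hSpe
  refine ⟨⟨Gpe.symm.trans Spe, Stmt0.USet a, Stmt0.USet_isOpen, ?_, ?_, ?_⟩, hbU⟩
  · rw [OpenPartialHomeomorph.trans_source, OpenPartialHomeomorph.symm_source, hGpe,
      IsOpenEmbedding.toOpenPartialHomeomorph_target, hSpe,
      TopologicalSpace.Opens.openPartialHomeomorphSubtypeCoe_source,
      Set.preimage_univ, Set.inter_univ, hrange]
  · rw [OpenPartialHomeomorph.trans_target, OpenPartialHomeomorph.symm_target, hGpe,
      IsOpenEmbedding.toOpenPartialHomeomorph_source, hSpe,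
      TopologicalSpace.Opens.openPartialHomeomorphSubtypeCoe_target,
      Set.preimage_univ, Set.inter_univ]
    rfl
  · intro x hx
    have hx' : x ∈ Set.range G := by
      have h := hx
      rw [OpenPartialHomeomorph.trans_source, OpenPartialHomeomorph.symm_source, hGpe,
        IsOpenEmbedding.toOpenPartialHomeomorph_target] at h
      exact h.1
    obtain ⟨u, rfl⟩ := hx'
    show ((Gpe.symm.trans Spe) (G u)).1 = Stmt0.projU (G u)
    rw [OpenPartialHomeomorph.trans_apply, hGpe]
    rw [hGoe.toOpenPartialHomeomorph_left_inv]
    have h1 : Spe u = (u : Circle × (Fin q → ℝ)) := rfl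
    rw [h1]
    have h2 : Stmt0.projU (G u) = u.1.1 := by
      rw [hGdef]
      show Stmt0.projU (Stmt0.VtoU ((Stmt0.SVhomeo q a) u)) = u.1.1
      rw [Stmt0.projU_VtoU]
      show Circle.exp (∑ i, Stmt0.mkTheta (Stmt0.sNum a u.1.1) (Stmt0.gmap u.1.2) i) = u.1.1
      rw [Stmt0.sum_mkTheta, Stmt0.exp_sNum]
    rw [h2]

end Final
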